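/- For n ≥ 1, Ψ(x·Pₙ(x)) = 0, where Pₙ(x) = Σ_{k=0}^{n} (q^{−n};q)_k (q^{n+2};q)_k (q(1+(q−1)x);q)_k qᵏ / ((q;q)_k² (q²;q)_k). Hence the ratios βₙ₊₁/β₁ (n≥0) are the moments of this q-Hahn family with parameters (c,d)=(0,1). -/
import Mathlib


open Finset Polynomial PowerSeries

noncomputable section

/-- The variable `q`, viewed as a rational function over `ℚ`. -/
def qv : RatFunc ℚ := RatFunc.X

/-- The Carlitz q-Bernoulli numbers: `β 0 = 1` together with the umbral recurrence
`q·(qβ+1)^n − β_n = [n = 1]` for `n ≥ 1`, where after binomial expansion the powers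
`β^k` are replaced by `β k`. -/
def IsCarlitz (β : ℕ → RatFunc ℚ) : Prop :=
  β 0 = 1 ∧ ∀ n : ℕ, 1 ≤ n →
    qv * (∑ k ∈ Finset.range (n + 1), (n.choose k : RatFunc ℚ) * qv ^ k * β k) - β n
      = if n = 1 then 1 else 0

/-- The linear functional `Ψ` on polynomials in `x`, sending `xⁿ` to `β n`. -/
def Psi (β : ℕ → RatFunc ℚ) (p : Polynomial (RatFunc ℚ)) : RatFunc ℚ :=
  p.sum fun n a => a * β n

/-- The q-Pochhammer symbol `(a; q)_k = (1−a)(1−qa)⋯(1−q^{k−1}a)`. -/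
def qPoch (a : RatFunc ℚ) (k : ℕ) : RatFunc ℚ :=
  ∏ j ∈ Finset.range k, (1 - qv ^ j * a)

/-- The polynomial q-Pochhammer symbol `(q(1+(q−1)x); q)_k`. -/
def polyPoch (k : ℕ) : Polynomial (RatFunc ℚ) :=
  ∏ j ∈ Finset.range k,
    (1 - Polynomial.C (qv ^ (j + 1)) * (1 + Polynomial.C (qv - 1) * Polynomial.X))

/-- The q-Hahn-type polynomials `Pₙ` with parameters `(c, d) = (0, 1)`. -/
def P (n : ℕ) : Polynomial (RatFunc ℚ) :=
  ∑ k ∈ Finset.range (n + 1),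
    Polynomial.C (qPoch (qv ^ (-(n : ℤ))) k * qPoch (qv ^ (n + 2)) k * qv ^ k /
      ((qPoch qv k) ^ 2 * qPoch (qv ^ 2) k)) * polyPoch k

-- ### Psi basics

variable (β : ℕ → RatFunc ℚ)

lemma psi_zero : Psi β 0 = 0 := Polynomial.sum_zero_index _

lemma psi_add (p r : Polynomial (RatFunc ℚ)) : Psi β (p + r) = Psi β p + Psi β r :=
  Polynomial.sum_add_index p r _ (fun _ => zero_mul _) (fun _ b c => add_mul b c _)

def PsiHom : Polynomial (RatFunc ℚ) →+ RatFunc ℚ where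
  toFun := Psi β
  map_zero' := psi_zero β
  map_add' := psi_add β

lemma psi_sub (p r : Polynomial (RatFunc ℚ)) : Psi β (p - r) = Psi β p - Psi β r :=
  map_sub (PsiHom β) p r

lemma psi_sum {ι : Type*} (s : Finset ι) (f : ι → Polynomial (RatFunc ℚ)) :
    Psi β (∑ i ∈ s, f i) = ∑ i ∈ s, Psi β (f i) :=
  map_sum (PsiHom β) f s

lemma psi_monomial (n : ℕ) (a : RatFunc ℚ) : Psi β (Polynomial.monomial n a) = a * β n :=
  Polynomial.sum_monomial_index a _ (zero_mul _)

lemma psi_C_mul (a : RatFunc ℚ) (p : Polynomial (RatFunc ℚ)) :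
    Psi β (Polynomial.C a * p) = a * Psi β p := by
  rw [← Polynomial.smul_eq_C_mul]
  unfold Psi
  rw [Polynomial.sum_smul_index p a (fun n b => b * β n) (fun _ => zero_mul _)]
  rw [Polynomial.sum_def, Polynomial.sum_def, Finset.mul_sum]
  exact Finset.sum_congr rfl fun i _ => by ring

lemma psi_one : Psi β 1 = β 0 := by
  rw [← Polynomial.monomial_zero_one, psi_monomial, one_mul]

lemma psi_X_pow (n : ℕ) : Psi β (Polynomial.X ^ n) = β n := by
  rw [Polynomial.X_pow_eq_monomial, psi_monomial, one_mul]

-- ### expansion of (1 + q X)^n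

lemma psi_pow_one_add (n : ℕ) :
    Psi β ((1 + Polynomial.C qv * Polynomial.X) ^ n)
      = ∑ k ∈ Finset.range (n + 1), (n.choose k : RatFunc ℚ) * qv ^ k * β k := by
  have hexp : (1 + Polynomial.C qv * Polynomial.X) ^ n
      = ∑ k ∈ Finset.range (n + 1),
          Polynomial.C ((n.choose k : RatFunc ℚ) * qv ^ k) * Polynomial.X ^ k := by
    rw [add_comm, add_pow]
    refine Finset.sum_congr rfl fun k _ => ?_
    simp only [one_pow, mul_one, mul_pow, ← Polynomial.C_pow, ← Polynomial.C_eq_natCast]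
    rw [mul_right_comm, ← Polynomial.C_mul, mul_comm ((qv : RatFunc ℚ) ^ k)]
  rw [hexp, psi_sum]
  exact Finset.sum_congr rfl fun k _ => by rw [psi_C_mul, psi_X_pow]

-- ### the functional Λ

lemma lam (h : IsCarlitz β) (p : Polynomial (RatFunc ℚ)) :
    qv * Psi β (p.comp (1 + Polynomial.C qv * Polynomial.X)) - Psi β p
      = (qv - 1) * p.coeff 0 + p.coeff 1 := by
  induction p using Polynomial.induction_on' with
  | add p r hp hr =>
      rw [Polynomial.add_comp, psi_add, psi_add, Polynomial.coeff_add, Polynomial.coeff_add]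
      linear_combination hp + hr
  | monomial n a =>
      rw [← Polynomial.C_mul_X_pow_eq_monomial, Polynomial.mul_comp, Polynomial.C_comp,
        Polynomial.pow_comp, Polynomial.X_comp, psi_C_mul, psi_pow_one_add, psi_C_mul,
        psi_X_pow, Polynomial.coeff_C_mul, Polynomial.coeff_C_mul, Polynomial.coeff_X_pow,
        Polynomial.coeff_X_pow]
      rcases Nat.eq_zero_or_pos n with hn | hn
      · subst hn
        simp [h.1]
        ring
      · have hrec := h.2 n hn
        have hn0 : n ≠ 0 := hn.ne'
        rcases eq_or_ne n 1 with h1 | h1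
        · subst h1
          norm_num at hrec ⊢
          linear_combination a * hrec
        · simp only [h1, if_false] at hrec
          rw [if_neg (show ¬(0 = n) by omega), if_neg (show ¬(1 = n) by omega)]
          linear_combination a * hrec

-- ### the companion product pP

def pP (k : ℕ) : Polynomial (RatFunc ℚ) :=
  ∏ j ∈ Finset.range k, (1 - Polynomial.C (qv ^ j) * (1 + Polynomial.C (qv - 1) * Polynomial.X))

lemma pP_comp (k : ℕ) :
    (pP k).comp (1 + Polynomial.C qv * Polynomial.X) = polyPoch k := by
  unfold pP polyPoch
  rw [Polynomial.prod_comp]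
  refine Finset.prod_congr rfl fun j _ => ?_
  rw [Polynomial.sub_comp, Polynomial.one_comp, Polynomial.mul_comp, Polynomial.C_comp,
    Polynomial.add_comp, Polynomial.one_comp, Polynomial.mul_comp, Polynomial.C_comp,
    Polynomial.X_comp]
  have h1 : (Polynomial.C (qv ^ (j + 1)) : Polynomial (RatFunc ℚ))
      = Polynomial.C (qv ^ j) * Polynomial.C qv := by
    rw [← Polynomial.C_mul, pow_succ]
  have h2 : (Polynomial.C (qv - 1) : Polynomial (RatFunc ℚ)) = Polynomial.C qv - 1 := by
    rw [map_sub, Polynomial.C_1]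
  rw [h1, h2]
  ring

lemma pP_succ (k : ℕ) : pP (k + 1) = Polynomial.C (1 - qv) * (Polynomial.X * polyPoch k) := by
  unfold pP polyPoch
  rw [Finset.prod_range_succ']
  have h0 : (1 - Polynomial.C ((qv : RatFunc ℚ) ^ 0) * (1 + Polynomial.C (qv - 1) * Polynomial.X))
      = Polynomial.C (1 - qv) * Polynomial.X := by
    simp only [pow_zero, map_sub, Polynomial.C_1]
    ring
  rw [h0]
  ring

lemma polyPoch_coeff_zero (k : ℕ) : (polyPoch k).coeff 0 = qPoch qv k := by
  rw [Polynomial.coeff_zero_eq_eval_zero]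
  unfold polyPoch qPoch
  rw [Polynomial.eval_prod]
  refine Finset.prod_congr rfl fun j _ => ?_
  simp [pow_succ]

lemma polyPoch_zero : polyPoch 0 = 1 := by simp [polyPoch]

lemma qPoch_zero (a : RatFunc ℚ) : qPoch a 0 = 1 := by simp [qPoch]

lemma qPoch_succ (a : RatFunc ℚ) (k : ℕ) :
    qPoch a (k + 1) = qPoch a k * (1 - qv ^ k * a) := Finset.prod_range_succ _ _

-- ### relations R1 and R2

lemma R1 (h : IsCarlitz β) (k : ℕ) :
    qv * Psi β (polyPoch (k + 1)) - (1 - qv) * Psi β (Polynomial.X * polyPoch k)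
      = (1 - qv) * qPoch qv k := by
  have hl := lam β h (pP (k + 1))
  rw [pP_comp, pP_succ, psi_C_mul] at hl
  have hc0 : (Polynomial.C (1 - qv) * (Polynomial.X * polyPoch k)).coeff 0 = 0 := by
    rw [Polynomial.coeff_C_mul, Polynomial.mul_coeff_zero, Polynomial.coeff_X_zero]
    ring
  have hc1 : (Polynomial.C (1 - qv) * (Polynomial.X * polyPoch k)).coeff 1
      = (1 - qv) * qPoch qv k := by
    rw [Polynomial.coeff_C_mul, show (1 : ℕ) = 0 + 1 from rfl, Polynomial.coeff_X_mul,
      polyPoch_coeff_zero]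
  rw [hc0, hc1] at hl
  linear_combination hl

lemma R2 (k : ℕ) :
    Psi β (polyPoch (k + 1))
      = Psi β (polyPoch k) - qv ^ (k + 1) * Psi β (polyPoch k)
        - qv ^ (k + 1) * (qv - 1) * Psi β (Polynomial.X * polyPoch k) := by
  have hp : polyPoch (k + 1)
      = polyPoch k - Polynomial.C (qv ^ (k + 1)) * polyPoch k
        - Polynomial.C (qv ^ (k + 1) * (qv - 1)) * (Polynomial.X * polyPoch k) := by
    unfold polyPoch
    rw [Finset.prod_range_succ]
    rw [map_mul, map_sub, Polynomial.C_1]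
    ring
  rw [hp, psi_sub, psi_sub, psi_C_mul, psi_C_mul]

-- ### closed forms

lemma Ucf (h : IsCarlitz β) : ∀ k : ℕ,
    (qv ^ (k + 1) - 1) * Psi β (polyPoch k) = (qv - 1) * qPoch qv k := by
  intro k
  induction k with
  | zero =>
      rw [polyPoch_zero, psi_one, h.1, qPoch_zero]
      ring
  | succ k ih =>
      have h1 := R1 β h k
      have h2 := R2 β k
      rw [qPoch_succ]
      linear_combination qv ^ (k + 1) * h1 - h2 + ih

-- nonzero lemmas

lemma qv_ne : (qv : RatFunc ℚ) ≠ 0 := RatFunc.X_ne_zero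

lemma one_sub_qv_pow_ne (m : ℕ) (hm : 1 ≤ m) : (1 : RatFunc ℚ) - qv ^ m ≠ 0 := by
  have heq : (1 : RatFunc ℚ) - qv ^ m
      = algebraMap (Polynomial ℚ) (RatFunc ℚ) (1 - Polynomial.X ^ m) := by
    rw [map_sub, map_one, map_pow, RatFunc.algebraMap_X]
    rfl
  rw [heq]
  apply RatFunc.algebraMap_ne_zero
  intro hc
  have hco := congrArg (fun p => Polynomial.coeff p 0) hc
  simp only [Polynomial.coeff_sub, Polynomial.coeff_one, Polynomial.coeff_X_pow,
    Polynomial.coeff_zero] at hco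
  rw [if_pos trivial, if_neg (by omega : ¬ (0:ℕ) = m)] at hco
  norm_num at hco

lemma qv_pow_sub_one_ne (m : ℕ) (hm : 1 ≤ m) : (qv : RatFunc ℚ) ^ m - 1 ≠ 0 := by
  intro hc
  exact one_sub_qv_pow_ne m hm (by linear_combination -hc)

lemma qv_sub_one_ne : (qv : RatFunc ℚ) - 1 ≠ 0 := by
  simpa using qv_pow_sub_one_ne 1 le_rfl

lemma qPoch_qv_ne (k : ℕ) : qPoch qv k ≠ 0 := by
  unfold qPoch
  rw [Finset.prod_ne_zero_iff]
  intro j _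
  have : (1 : RatFunc ℚ) - qv ^ j * qv = 1 - qv ^ (j + 1) := by rw [pow_succ]
  rw [this]
  exact one_sub_qv_pow_ne (j + 1) (by omega)

lemma qPoch_qv_sq_ne (k : ℕ) : qPoch (qv ^ 2) k ≠ 0 := by
  unfold qPoch
  rw [Finset.prod_ne_zero_iff]
  intro j _
  have : (1 : RatFunc ℚ) - qv ^ j * qv ^ 2 = 1 - qv ^ (j + 2) := by rw [pow_add]
  rw [this]
  exact one_sub_qv_pow_ne (j + 2) (by omega)

lemma Wcf (h : IsCarlitz β) (k : ℕ) :
    (1 - qv ^ (k + 2)) * Psi β (Polynomial.X * polyPoch k) = (qv - 1) * qPoch qv k := by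
  have h1 := R1 β h k
  have h2 := Ucf β h (k + 1)
  rw [qPoch_succ] at h2
  apply mul_left_cancel₀ qv_sub_one_ne
  linear_combination (1 - qv ^ (k + 2)) * h1 + qv * h2

-- ### the Gosper certificate

def qA (n m : ℕ) : RatFunc ℚ := ∏ j ∈ Finset.range m, (qv ^ n - qv ^ j)

lemma qA_succ (n m : ℕ) : qA n (m + 1) = qA n m * (qv ^ n - qv ^ m) :=
  Finset.prod_range_succ _ _

lemma qPoch_neg_eq (n k : ℕ) :
    qPoch (qv ^ (-(n : ℤ))) k = qA n k / qv ^ (n * k) := by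
  unfold qPoch qA
  rw [zpow_neg, zpow_natCast]
  rw [show (qv ^ (n * k) : RatFunc ℚ) = ∏ _j ∈ Finset.range k, qv ^ n by
    rw [Finset.prod_const, Finset.card_range, ← pow_mul]]
  rw [← Finset.prod_div_distrib]
  refine Finset.prod_congr rfl fun j _ => ?_
  have hyne : (qv : RatFunc ℚ) ^ n ≠ 0 := pow_ne_zero n qv_ne
  field_simp

def Gf (n m : ℕ) : RatFunc ℚ :=
  qv ^ n * (qv - 1) * (qv ^ m - 1) * qA n m * qPoch (qv ^ (n + 2)) m /
    ((qv ^ (n + 2) - 1) * (qv ^ n - 1) * qv ^ (n * m) * qPoch qv m * qPoch (qv ^ 2) m)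

lemma Gf_zero (n : ℕ) : Gf n 0 = 0 := by
  unfold Gf
  rw [pow_zero]
  simp

lemma Gf_top (n : ℕ) : Gf n (n + 1) = 0 := by
  have h : qA n (n + 1) = 0 := by
    apply Finset.prod_eq_zero (Finset.self_mem_range_succ n)
    exact sub_self _
  unfold Gf
  rw [h]
  simp

set_option maxHeartbeats 2000000 in
lemma key_step (h : IsCarlitz β) (n : ℕ) (hn : 1 ≤ n) (k : ℕ) :
    qPoch (qv ^ (-(n : ℤ))) k * qPoch (qv ^ (n + 2)) k * qv ^ k /
        ((qPoch qv k) ^ 2 * qPoch (qv ^ 2) k) * Psi β (Polynomial.X * polyPoch k)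
      = Gf n (k + 1) - Gf n k := by
  have hW : Psi β (Polynomial.X * polyPoch k)
      = (qv - 1) * qPoch qv k / (1 - qv ^ (k + 2)) := by
    rw [eq_div_iff (one_sub_qv_pow_ne (k + 2) (by omega))]
    linear_combination Wcf β h k
  rw [hW]
  have hxq : (1 : RatFunc ℚ) - qv ^ k * qv ≠ 0 := by
    rw [← pow_succ]; exact one_sub_qv_pow_ne (k + 1) (by omega)
  have hxq2 : (1 : RatFunc ℚ) - qv ^ k * qv ^ 2 ≠ 0 := by
    rw [← pow_add]; exact one_sub_qv_pow_ne (k + 2) (by omega)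
  have hxq2' : (1 : RatFunc ℚ) - qv ^ (k + 2) ≠ 0 := one_sub_qv_pow_ne (k + 2) (by omega)
  have hyq2 : (qv : RatFunc ℚ) ^ (n + 2) - 1 ≠ 0 := qv_pow_sub_one_ne (n + 2) (by omega)
  have hy1 : (qv : RatFunc ℚ) ^ n - 1 ≠ 0 := qv_pow_sub_one_ne n hn
  have hyk : (qv : RatFunc ℚ) ^ (n * k) ≠ 0 := pow_ne_zero _ qv_ne
  have hyk1 : (qv : RatFunc ℚ) ^ (n * (k + 1)) ≠ 0 := pow_ne_zero _ qv_ne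
  have hCk := qPoch_qv_ne k
  have hDk := qPoch_qv_sq_ne k
  have hd : qPoch (qv ^ (-(n : ℤ))) k * qPoch (qv ^ (n + 2)) k * qv ^ k /
        ((qPoch qv k) ^ 2 * qPoch (qv ^ 2) k)
      = qA n k * qPoch (qv ^ (n + 2)) k * qv ^ k /
          (qv ^ (n * k) * ((qPoch qv k) ^ 2 * qPoch (qv ^ 2) k)) := by
    rw [qPoch_neg_eq, div_mul_eq_mul_div, div_mul_eq_mul_div, div_div]
  rw [hd, div_mul_div_comm]
  unfold Gf
  rw [qA_succ, qPoch_succ qv k, qPoch_succ (qv ^ 2) k, qPoch_succ (qv ^ (n + 2)) k]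
  have hD1 : (qv ^ (n + 2) - 1) * (qv ^ n - 1) * qv ^ (n * (k + 1)) *
      (qPoch qv k * (1 - qv ^ k * qv)) * (qPoch (qv ^ 2) k * (1 - qv ^ k * qv ^ 2)) ≠ 0 := by
    apply_rules [mul_ne_zero]
  have hD0 : (qv ^ (n + 2) - 1) * (qv ^ n - 1) * qv ^ (n * k) *
      qPoch qv k * qPoch (qv ^ 2) k ≠ 0 := by
    apply_rules [mul_ne_zero]
  have hC2 : (qPoch qv k) ^ 2 ≠ 0 := pow_ne_zero 2 hCk
  have hDL : qv ^ (n * k) * ((qPoch qv k) ^ 2 * qPoch (qv ^ 2) k) * (1 - qv ^ (k + 2)) ≠ 0 :=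
    mul_ne_zero (mul_ne_zero hyk (mul_ne_zero hC2 hDk)) hxq2'
  rw [div_sub_div _ _ hD1 hD0, div_eq_div_iff hDL (mul_ne_zero hD1 hD0)]
  ring


/-- `f ↦ Ψ(x·f)` vanishes on `Pₙ` for `n ≥ 1`: the ratios `βₙ₊₁/β₁` are the moments
of the q-Hahn family with parameters `(c, d) = (0, 1)`. -/
theorem psi_qHahn01 (β : ℕ → RatFunc ℚ) (h : IsCarlitz β) (n : ℕ) (hn : 1 ≤ n) :
    Psi β (Polynomial.X * P n) = 0 := by
  have hXP : Polynomial.X * P n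
      = ∑ k ∈ Finset.range (n + 1),
          Polynomial.C (qPoch (qv ^ (-(n : ℤ))) k * qPoch (qv ^ (n + 2)) k * qv ^ k /
            ((qPoch qv k) ^ 2 * qPoch (qv ^ 2) k)) * (Polynomial.X * polyPoch k) := by
    unfold P
    rw [Finset.mul_sum]
    exact Finset.sum_congr rfl fun k _ => by ring
  rw [hXP, psi_sum]
  have : ∀ k ∈ Finset.range (n + 1),
      Psi β (Polynomial.C (qPoch (qv ^ (-(n : ℤ))) k * qPoch (qv ^ (n + 2)) k * qv ^ k /
        ((qPoch qv k) ^ 2 * qPoch (qv ^ 2) k)) * (Polynomial.X * polyPoch k))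
      = Gf n (k + 1) - Gf n k := by
    intro k _
    rw [psi_C_mul]
    exact key_step β h n hn k
  rw [Finset.sum_congr rfl this, Finset.sum_range_sub (Gf n) (n + 1), Gf_top, Gf_zero, sub_zero]
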